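/- Let V ∈ L¹(ℝⁿ) satisfy ∬ |V(x)| |V(y)| |x−y|² dx dy < ∞, let ψ ∈ L²(ℝⁿ) and φ = |V|^{1/2} ψ. Then the gradient of p ↦ |φ̂(p)|² satisfies the uniform bound |∇|φ̂(p)|²| ≤ (2π)^{-n} ‖ψ‖₂² (∬ |V(x)||V(y)| |x−y|² dx dy)^{1/2} for all p ∈ ℝⁿ. -/

import Mathlib

open Real MeasureTheory Complex

lemma exp_I_lip (s t : ℝ) :
    ‖Complex.exp (Complex.I * s) - Complex.exp (Complex.I * t)‖ ≤ |s - t| := by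
  have hd : ∀ z : ℝ, HasDerivAt (fun y : ℝ => Complex.exp (Complex.I * y))
      (Complex.exp (Complex.I * z) * Complex.I) z := by
    intro z
    have h1 : HasDerivAt (fun w : ℂ => Complex.exp (Complex.I * w))
        (Complex.exp (Complex.I * (z : ℂ)) * Complex.I) (z : ℂ) := by
      simpa using ((hasDerivAt_id (z : ℂ)).const_mul Complex.I).cexp
    exact h1.comp_ofReal
  have hlip : LipschitzWith 1 (fun y : ℝ => Complex.exp (Complex.I * y)) := by
    apply lipschitzWith_of_nnnorm_deriv_le (fun z => (hd z).differentiableAt)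
    intro z
    rw [(hd z).deriv]
    rw [← NNReal.coe_le_coe]
    simp [nnnorm_mul, Complex.norm_exp]
  have := hlip.dist_le_mul s t
  simpa [dist_eq_norm, Real.dist_eq] using this

noncomputable def gfun {n : ℕ} (V : EuclideanSpace ℝ (Fin n) → ℝ)
    (ψ : EuclideanSpace ℝ (Fin n) → ℂ) (q x : EuclideanSpace ℝ (Fin n)) : ℂ :=
  (Real.sqrt |V x| : ℂ) * ψ x * Complex.exp (-Complex.I * ((inner ℝ q x : ℝ) : ℂ))

section aux
variable {n : ℕ} {V : EuclideanSpace ℝ (Fin n) → ℝ} {ψ : EuclideanSpace ℝ (Fin n) → ℂ}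

lemma sqV_memLp (hV : Integrable V) :
    MemLp (fun x => ((Real.sqrt |V x| : ℝ) : ℂ)) 2 (volume : Measure (EuclideanSpace ℝ (Fin n))) := by
  have habs : AEStronglyMeasurable (fun x => |V x|) (volume : Measure (EuclideanSpace ℝ (Fin n))) := by
    simpa [Real.norm_eq_abs] using hV.1.norm
  have hmes : AEStronglyMeasurable (fun x => ((Real.sqrt |V x| : ℝ) : ℂ))
      (volume : Measure (EuclideanSpace ℝ (Fin n))) :=
    Complex.continuous_ofReal.comp_aestronglyMeasurable
      (Real.continuous_sqrt.comp_aestronglyMeasurable habs)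
  rw [memLp_two_iff_integrable_sq_norm hmes]
  have : (fun x => ‖((Real.sqrt |V x| : ℝ) : ℂ)‖ ^ 2) = fun x => |V x| := by
    funext x
    rw [Complex.norm_real, Real.norm_eq_abs, _root_.abs_of_nonneg (Real.sqrt_nonneg _),
      Real.sq_sqrt (abs_nonneg _)]
  rw [this]
  exact hV.abs

lemma hfun_integrable (hV : Integrable V) (hψ : MemLp ψ 2 volume) :
    Integrable (fun x => (Real.sqrt |V x| : ℂ) * ψ x) volume := by
  have hsm : MemLp ((fun x => ((Real.sqrt |V x| : ℝ) : ℂ)) • ψ) 1 volume := by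
    haveI : ENNReal.HolderTriple 2 2 1 := ENNReal.holderConjugate_iff.mpr ENNReal.inv_two_add_inv_two
    exact hψ.smul (sqV_memLp hV)
  have h2 := memLp_one_iff_integrable.mp hsm
  refine h2.congr (Filter.Eventually.of_forall fun x => ?_)
  simp [Pi.smul_apply, smul_eq_mul]

lemma gfun_integrable (hV : Integrable V) (hψ : MemLp ψ 2 volume)
    (q : EuclideanSpace ℝ (Fin n)) : Integrable (gfun V ψ q) volume := by
  have hcont : Continuous fun x : EuclideanSpace ℝ (Fin n) =>
      Complex.exp (-Complex.I * ((inner ℝ q x : ℝ) : ℂ)) := by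
    refine Complex.continuous_exp.comp ?_
    exact (continuous_const.mul (Complex.continuous_ofReal.comp (innerSL ℝ q).continuous))
  have h1 : Integrable (fun x => Complex.exp (-Complex.I * ((inner ℝ q x : ℝ) : ℂ)) *
      ((Real.sqrt |V x| : ℂ) * ψ x)) volume := by
    refine (hfun_integrable hV hψ).bdd_mul (c := 1) hcont.aestronglyMeasurable ?_
    refine Filter.Eventually.of_forall fun x => ?_
    rw [Complex.norm_exp]
    simp
  refine h1.congr ?_
  refine Filter.Eventually.of_forall fun x => ?_
  unfold gfun
  ring

end aux

section aux2
variable {n : ℕ} {V : EuclideanSpace ℝ (Fin n) → ℝ} {ψ : EuclideanSpace ℝ (Fin n) → ℂ}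

local notation "P" => (EuclideanSpace ℝ (Fin n) × EuclideanSpace ℝ (Fin n))

lemma memLp_A (hVV : Integrable (fun z : EuclideanSpace ℝ (Fin n) × EuclideanSpace ℝ (Fin n) =>
      |V z.1| * |V z.2| * ‖z.1 - z.2‖ ^ 2)) :
    MemLp (fun z : P => Real.sqrt (|V z.1| * |V z.2| * ‖z.1 - z.2‖ ^ 2)) 2 ((volume : Measure (EuclideanSpace ℝ (Fin n))).prod (volume : Measure (EuclideanSpace ℝ (Fin n)))) := by
  have hVV' : Integrable (fun z : P => |V z.1| * |V z.2| * ‖z.1 - z.2‖ ^ 2) ((volume : Measure (EuclideanSpace ℝ (Fin n))).prod (volume : Measure (EuclideanSpace ℝ (Fin n)))) := by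
    rwa [← MeasureTheory.Measure.volume_eq_prod]
  have hmes : AEStronglyMeasurable
      (fun z : P => Real.sqrt (|V z.1| * |V z.2| * ‖z.1 - z.2‖ ^ 2)) ((volume : Measure (EuclideanSpace ℝ (Fin n))).prod (volume : Measure (EuclideanSpace ℝ (Fin n)))) :=
    Real.continuous_sqrt.comp_aestronglyMeasurable hVV'.1
  rw [memLp_two_iff_integrable_sq hmes]
  have : (fun z : P => Real.sqrt (|V z.1| * |V z.2| * ‖z.1 - z.2‖ ^ 2) ^ 2)
      = fun z : P => |V z.1| * |V z.2| * ‖z.1 - z.2‖ ^ 2 := by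
    funext z
    rw [Real.sq_sqrt (by positivity)]
  rw [this]
  exact hVV'

lemma memLp_B (hψ : MemLp ψ 2 volume) :
    MemLp (fun z : P => ‖ψ z.1‖ * ‖ψ z.2‖) 2 ((volume : Measure (EuclideanSpace ℝ (Fin n))).prod (volume : Measure (EuclideanSpace ℝ (Fin n)))) := by
  have hmes : AEStronglyMeasurable (fun z : P => ‖ψ z.1‖ * ‖ψ z.2‖) ((volume : Measure (EuclideanSpace ℝ (Fin n))).prod (volume : Measure (EuclideanSpace ℝ (Fin n)))) :=
    (hψ.1.norm.comp_fst).mul (hψ.1.norm.comp_snd)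
  rw [memLp_two_iff_integrable_sq hmes]
  have : (fun z : P => (‖ψ z.1‖ * ‖ψ z.2‖) ^ 2)
      = fun z : P => ‖ψ z.1‖ ^ 2 * ‖ψ z.2‖ ^ 2 := by
    funext z; ring
  rw [this]
  exact (hψ.norm.integrable_sq).mul_prod (hψ.norm.integrable_sq)

lemma W_integrable (hψ : MemLp ψ 2 volume)
    (hVV : Integrable (fun z : EuclideanSpace ℝ (Fin n) × EuclideanSpace ℝ (Fin n) =>
      |V z.1| * |V z.2| * ‖z.1 - z.2‖ ^ 2)) :
    Integrable (fun z : P => Real.sqrt (|V z.1| * |V z.2| * ‖z.1 - z.2‖ ^ 2) *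
      (‖ψ z.1‖ * ‖ψ z.2‖)) ((volume : Measure (EuclideanSpace ℝ (Fin n))).prod (volume : Measure (EuclideanSpace ℝ (Fin n)))) := by
  have hsm : MemLp ((fun z : P => Real.sqrt (|V z.1| * |V z.2| * ‖z.1 - z.2‖ ^ 2)) •
      (fun z : P => ‖ψ z.1‖ * ‖ψ z.2‖)) 1 ((volume : Measure (EuclideanSpace ℝ (Fin n))).prod (volume : Measure (EuclideanSpace ℝ (Fin n)))) := by
    haveI : ENNReal.HolderTriple 2 2 1 := ENNReal.holderConjugate_iff.mpr ENNReal.inv_two_add_inv_two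
    exact (memLp_B hψ).smul (memLp_A hVV)
  have h2 := memLp_one_iff_integrable.mp hsm
  refine h2.congr (Filter.Eventually.of_forall fun z => ?_)
  simp [Pi.smul_apply, smul_eq_mul]

lemma W_int_le (hψ : MemLp ψ 2 volume)
    (hVV : Integrable (fun z : EuclideanSpace ℝ (Fin n) × EuclideanSpace ℝ (Fin n) =>
      |V z.1| * |V z.2| * ‖z.1 - z.2‖ ^ 2)) :
    (∫ z : P, Real.sqrt (|V z.1| * |V z.2| * ‖z.1 - z.2‖ ^ 2) *
        (‖ψ z.1‖ * ‖ψ z.2‖) ∂((volume : Measure (EuclideanSpace ℝ (Fin n))).prod (volume : Measure (EuclideanSpace ℝ (Fin n))))) ≤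
      (∫ x, ‖ψ x‖ ^ 2) * Real.sqrt (∫ z : P, |V z.1| * |V z.2| * ‖z.1 - z.2‖ ^ 2) := by
  have hpq : Real.HolderConjugate 2 2 := Real.HolderConjugate.two_two
  have hA2 : MemLp (fun z : P => Real.sqrt (|V z.1| * |V z.2| * ‖z.1 - z.2‖ ^ 2))
      (ENNReal.ofReal 2) ((volume : Measure (EuclideanSpace ℝ (Fin n))).prod (volume : Measure (EuclideanSpace ℝ (Fin n)))) := by
    rw [show ENNReal.ofReal 2 = 2 by norm_num]; exact memLp_A hVV
  have hB2 : MemLp (fun z : P => ‖ψ z.1‖ * ‖ψ z.2‖) (ENNReal.ofReal 2) ((volume : Measure (EuclideanSpace ℝ (Fin n))).prod (volume : Measure (EuclideanSpace ℝ (Fin n)))) := by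
    rw [show ENNReal.ofReal 2 = 2 by norm_num]; exact memLp_B hψ
  have key := integral_mul_le_Lp_mul_Lq_of_nonneg hpq
    (Filter.Eventually.of_forall fun z : P => Real.sqrt_nonneg _)
    (Filter.Eventually.of_forall fun z : P =>
      mul_nonneg (norm_nonneg _) (norm_nonneg _)) hA2 hB2
  refine key.trans (le_of_eq ?_)
  have e1 : (∫ z : P, Real.sqrt (|V z.1| * |V z.2| * ‖z.1 - z.2‖ ^ 2) ^ (2:ℝ) ∂((volume : Measure (EuclideanSpace ℝ (Fin n))).prod (volume : Measure (EuclideanSpace ℝ (Fin n)))))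
      = ∫ z : P, |V z.1| * |V z.2| * ‖z.1 - z.2‖ ^ 2 ∂((volume : Measure (EuclideanSpace ℝ (Fin n))).prod (volume : Measure (EuclideanSpace ℝ (Fin n)))) := by
    refine integral_congr_ae (Filter.Eventually.of_forall fun z => ?_)
    show Real.sqrt (|V z.1| * |V z.2| * ‖z.1 - z.2‖ ^ 2) ^ (2:ℝ) = _
    rw [Real.rpow_two, Real.sq_sqrt (by positivity)]
  have e2 : (∫ z : P, (‖ψ z.1‖ * ‖ψ z.2‖) ^ (2:ℝ) ∂((volume : Measure (EuclideanSpace ℝ (Fin n))).prod (volume : Measure (EuclideanSpace ℝ (Fin n)))))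
      = (∫ x, ‖ψ x‖ ^ 2) * (∫ x, ‖ψ x‖ ^ 2) := by
    rw [show (fun z : P => (‖ψ z.1‖ * ‖ψ z.2‖) ^ (2:ℝ)) = fun z : P => ‖ψ z.1‖^2 * ‖ψ z.2‖^2 by
      funext z; rw [Real.rpow_two]; ring]
    exact integral_prod_mul (fun x => ‖ψ x‖^2) (fun x => ‖ψ x‖^2)
  rw [e1, e2]
  rw [← Real.sqrt_eq_rpow, ← Real.sqrt_eq_rpow]
  rw [Real.sqrt_mul_self (integral_nonneg fun x => by positivity)]
  rw [mul_comm, ← MeasureTheory.Measure.volume_eq_prod]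
end aux2

section aux3
variable {n : ℕ} {V : EuclideanSpace ℝ (Fin n) → ℝ} {ψ : EuclideanSpace ℝ (Fin n) → ℂ}

local notation "P" => (EuclideanSpace ℝ (Fin n) × EuclideanSpace ℝ (Fin n))

lemma gfun_conj_integrable (hV : Integrable V) (hψ : MemLp ψ 2 volume)
    (q : EuclideanSpace ℝ (Fin n)) :
    Integrable (fun y => (starRingEnd ℂ) (gfun V ψ q y)) volume := by
  refine Integrable.mono' (gfun_integrable hV hψ q).norm ?_ ?_
  · exact (RCLike.continuous_conj).comp_aestronglyMeasurable (gfun_integrable hV hψ q).1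
  · exact Filter.Eventually.of_forall fun x => by rw [RCLike.norm_conj]

lemma repr_F (hV : Integrable V) (hψ : MemLp ψ 2 volume) (q : EuclideanSpace ℝ (Fin n)) :
    ‖(((2 * π) ^ (-(n : ℝ) / 2) : ℝ) : ℂ) * ∫ x, gfun V ψ q x‖ ^ 2
      = (2 * π : ℝ) ^ (-(n : ℝ)) *
        (∫ z : P, gfun V ψ q z.1 * (starRingEnd ℂ) (gfun V ψ q z.2) ∂
          ((volume : Measure (EuclideanSpace ℝ (Fin n))).prod
            (volume : Measure (EuclideanSpace ℝ (Fin n))))).re := by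
  have h2 : (∫ z : P, gfun V ψ q z.1 * (starRingEnd ℂ) (gfun V ψ q z.2) ∂
      ((volume : Measure (EuclideanSpace ℝ (Fin n))).prod
        (volume : Measure (EuclideanSpace ℝ (Fin n)))))
      = (∫ x, gfun V ψ q x) * (starRingEnd ℂ) (∫ x, gfun V ψ q x) := by
    rw [integral_prod_mul (gfun V ψ q) (fun y => (starRingEnd ℂ) (gfun V ψ q y))]
    rw [integral_conj]
  rw [h2, Complex.mul_conj, norm_mul, mul_pow]
  have hc : ‖(((2 * π) ^ (-(n : ℝ) / 2) : ℝ) : ℂ)‖ ^ 2 = (2 * π : ℝ) ^ (-(n : ℝ)) := by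
    rw [Complex.norm_real, Real.norm_eq_abs,
      _root_.abs_of_nonneg (Real.rpow_nonneg (by positivity) _)]
    rw [← Real.rpow_natCast ((2 * π) ^ (-(n : ℝ) / 2)) 2, ← Real.rpow_mul (by positivity)]
    norm_num
  have hw : ‖∫ x, gfun V ψ q x‖ ^ 2 = ((Complex.normSq (∫ x, gfun V ψ q x) : ℝ) : ℂ).re := by
    rw [Complex.ofReal_re, Complex.normSq_eq_norm_sq]
  rw [hc, hw]

lemma pointwise_bound (q q' : EuclideanSpace ℝ (Fin n)) (z : P) :
    ‖gfun V ψ q z.1 * (starRingEnd ℂ) (gfun V ψ q z.2) -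
        gfun V ψ q' z.1 * (starRingEnd ℂ) (gfun V ψ q' z.2)‖
      ≤ Real.sqrt (|V z.1| * |V z.2| * ‖z.1 - z.2‖ ^ 2) * (‖ψ z.1‖ * ‖ψ z.2‖) * dist q q' := by
  have comb : ∀ r : EuclideanSpace ℝ (Fin n),
      gfun V ψ r z.1 * (starRingEnd ℂ) (gfun V ψ r z.2)
        = ((Real.sqrt |V z.1| : ℂ) * ψ z.1 *
            ((starRingEnd ℂ) ((Real.sqrt |V z.2| : ℂ) * ψ z.2))) *
          Complex.exp (Complex.I * ((((inner ℝ r z.2 : ℝ)) - ((inner ℝ r z.1 : ℝ)) : ℝ) : ℂ)) := by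
    intro r
    unfold gfun
    rw [map_mul]
    have hconjexp : (starRingEnd ℂ) (Complex.exp (-Complex.I * ((inner ℝ r z.2 : ℝ) : ℂ)))
        = Complex.exp (Complex.I * ((inner ℝ r z.2 : ℝ) : ℂ)) := by
      rw [← Complex.exp_conj]
      congr 1
      simp [map_mul, Complex.conj_I, Complex.conj_ofReal]
    rw [hconjexp]
    have e : Complex.exp (-Complex.I * ((inner ℝ r z.1 : ℝ) : ℂ)) *
        Complex.exp (Complex.I * ((inner ℝ r z.2 : ℝ) : ℂ))
        = Complex.exp (Complex.I * ((((inner ℝ r z.2 : ℝ)) - ((inner ℝ r z.1 : ℝ)) : ℝ) : ℂ)) := by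
      rw [← Complex.exp_add]
      congr 1
      push_cast
      ring
    calc (Real.sqrt |V z.1| : ℂ) * ψ z.1 * Complex.exp (-Complex.I * ((inner ℝ r z.1 : ℝ) : ℂ)) *
          ((starRingEnd ℂ) ((Real.sqrt |V z.2| : ℂ) * ψ z.2) *
            Complex.exp (Complex.I * ((inner ℝ r z.2 : ℝ) : ℂ)))
        = ((Real.sqrt |V z.1| : ℂ) * ψ z.1 *
            ((starRingEnd ℂ) ((Real.sqrt |V z.2| : ℂ) * ψ z.2))) *
          (Complex.exp (-Complex.I * ((inner ℝ r z.1 : ℝ) : ℂ)) *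
            Complex.exp (Complex.I * ((inner ℝ r z.2 : ℝ) : ℂ))) := by ring
      _ = _ := by rw [e]
  rw [comb q, comb q', ← mul_sub, norm_mul]
  have hD : ‖(Real.sqrt |V z.1| : ℂ) * ψ z.1 *
      ((starRingEnd ℂ) ((Real.sqrt |V z.2| : ℂ) * ψ z.2))‖
      = Real.sqrt |V z.1| * ‖ψ z.1‖ * (Real.sqrt |V z.2| * ‖ψ z.2‖) := by
    rw [norm_mul, RCLike.norm_conj, norm_mul, norm_mul, Complex.norm_real, Complex.norm_real,
      Real.norm_eq_abs, Real.norm_eq_abs, _root_.abs_of_nonneg (Real.sqrt_nonneg _),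
      _root_.abs_of_nonneg (Real.sqrt_nonneg _)]
  have hE : ‖Complex.exp (Complex.I * ((((inner ℝ q z.2 : ℝ)) - ((inner ℝ q z.1 : ℝ)) : ℝ) : ℂ)) -
      Complex.exp (Complex.I * ((((inner ℝ q' z.2 : ℝ)) - ((inner ℝ q' z.1 : ℝ)) : ℝ) : ℂ))‖
      ≤ dist q q' * ‖z.1 - z.2‖ := by
    refine (exp_I_lip _ _).trans ?_
    have hdiff : (((inner ℝ q z.2 : ℝ)) - ((inner ℝ q z.1 : ℝ))) -
        (((inner ℝ q' z.2 : ℝ)) - ((inner ℝ q' z.1 : ℝ)))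
        = (inner ℝ (q - q') (z.2 - z.1) : ℝ) := by
      simp only [inner_sub_left, inner_sub_right]
      ring
    rw [hdiff]
    refine (abs_real_inner_le_norm _ _).trans (le_of_eq ?_)
    rw [norm_sub_rev z.2 z.1, dist_eq_norm]
  have hsq : Real.sqrt (|V z.1| * |V z.2| * ‖z.1 - z.2‖ ^ 2)
      = Real.sqrt |V z.1| * Real.sqrt |V z.2| * ‖z.1 - z.2‖ := by
    rw [Real.sqrt_mul (by positivity), Real.sqrt_mul (abs_nonneg _),
      Real.sqrt_sq (norm_nonneg _)]
  calc ‖(Real.sqrt |V z.1| : ℂ) * ψ z.1 *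
        ((starRingEnd ℂ) ((Real.sqrt |V z.2| : ℂ) * ψ z.2))‖ *
        ‖Complex.exp (Complex.I * ((((inner ℝ q z.2 : ℝ)) - ((inner ℝ q z.1 : ℝ)) : ℝ) : ℂ)) -
          Complex.exp (Complex.I * ((((inner ℝ q' z.2 : ℝ)) - ((inner ℝ q' z.1 : ℝ)) : ℝ) : ℂ))‖
      ≤ ‖(Real.sqrt |V z.1| : ℂ) * ψ z.1 *
          ((starRingEnd ℂ) ((Real.sqrt |V z.2| : ℂ) * ψ z.2))‖ * (dist q q' * ‖z.1 - z.2‖) :=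
        mul_le_mul_of_nonneg_left hE (norm_nonneg _)
    _ = Real.sqrt (|V z.1| * |V z.2| * ‖z.1 - z.2‖ ^ 2) * (‖ψ z.1‖ * ‖ψ z.2‖) * dist q q' := by
        rw [hD, hsq]; ring
end aux3

section aux4
variable {n : ℕ} {V : EuclideanSpace ℝ (Fin n) → ℝ} {ψ : EuclideanSpace ℝ (Fin n) → ℂ}

local notation "P" => (EuclideanSpace ℝ (Fin n) × EuclideanSpace ℝ (Fin n))

lemma main_lip (hV : Integrable V) (hψ : MemLp ψ 2 volume)
    (hVV : Integrable (fun z : EuclideanSpace ℝ (Fin n) × EuclideanSpace ℝ (Fin n) =>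
      |V z.1| * |V z.2| * ‖z.1 - z.2‖ ^ 2)) :
    LipschitzWith (Real.toNNReal ((2 * π : ℝ) ^ (-(n : ℝ)) * (∫ x, ‖ψ x‖ ^ 2) *
        Real.sqrt (∫ z : P, |V z.1| * |V z.2| * ‖z.1 - z.2‖ ^ 2)))
      (fun q : EuclideanSpace ℝ (Fin n) =>
        ‖(((2 * π) ^ (-(n : ℝ) / 2) : ℝ) : ℂ) * ∫ x, gfun V ψ q x‖ ^ 2) := by
  have hc0 : (0:ℝ) ≤ (2 * π : ℝ) ^ (-(n : ℝ)) := Real.rpow_nonneg (by positivity) _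
  have hK0 : (0:ℝ) ≤ (∫ x, ‖ψ x‖ ^ 2) * Real.sqrt (∫ z : P, |V z.1| * |V z.2| * ‖z.1 - z.2‖ ^ 2) :=
    mul_nonneg (integral_nonneg fun x => by positivity) (Real.sqrt_nonneg _)
  have hK : (0:ℝ) ≤ (2 * π : ℝ) ^ (-(n : ℝ)) * (∫ x, ‖ψ x‖ ^ 2) *
      Real.sqrt (∫ z : P, |V z.1| * |V z.2| * ‖z.1 - z.2‖ ^ 2) := by
    rw [mul_assoc]; exact mul_nonneg hc0 hK0
  refine LipschitzWith.of_dist_le_mul fun q q' => ?_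
  rw [Real.coe_toNNReal _ hK, Real.dist_eq]
  rw [repr_F hV hψ q, repr_F hV hψ q']
  set Gq := fun z : P => gfun V ψ q z.1 * (starRingEnd ℂ) (gfun V ψ q z.2) with hGq
  set Gq' := fun z : P => gfun V ψ q' z.1 * (starRingEnd ℂ) (gfun V ψ q' z.2) with hGq'
  set μ2 := ((volume : Measure (EuclideanSpace ℝ (Fin n))).prod
    (volume : Measure (EuclideanSpace ℝ (Fin n)))) with hμ2
  have hIntGq : Integrable Gq μ2 :=
    (gfun_integrable hV hψ q).mul_prod (gfun_conj_integrable hV hψ q)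
  have hIntGq' : Integrable Gq' μ2 :=
    (gfun_integrable hV hψ q').mul_prod (gfun_conj_integrable hV hψ q')
  have hWd : Integrable (fun z : P => Real.sqrt (|V z.1| * |V z.2| * ‖z.1 - z.2‖ ^ 2) *
      (‖ψ z.1‖ * ‖ψ z.2‖) * dist q q') μ2 := (W_integrable hψ hVV).mul_const _
  have step1 : ‖(∫ z, Gq z ∂μ2) - (∫ z, Gq' z ∂μ2)‖ ≤
      (∫ z : P, Real.sqrt (|V z.1| * |V z.2| * ‖z.1 - z.2‖ ^ 2) *
        (‖ψ z.1‖ * ‖ψ z.2‖) ∂μ2) * dist q q' := by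
    rw [← integral_sub hIntGq hIntGq']
    refine le_trans (norm_integral_le_of_norm_le hWd
      (Filter.Eventually.of_forall fun z => pointwise_bound q q' z)) (le_of_eq ?_)
    rw [← integral_mul_const]
  have step2 : |((∫ z, Gq z ∂μ2)).re - ((∫ z, Gq' z ∂μ2)).re| ≤
      ((∫ x, ‖ψ x‖ ^ 2) * Real.sqrt (∫ z : P, |V z.1| * |V z.2| * ‖z.1 - z.2‖ ^ 2)) *
        dist q q' := by
    rw [← Complex.sub_re]
    refine le_trans (Complex.abs_re_le_norm _) ?_
    refine step1.trans ?_
    exact mul_le_mul_of_nonneg_right (W_int_le hψ hVV) dist_nonneg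
  calc |(2 * π : ℝ) ^ (-(n : ℝ)) * ((∫ z, Gq z ∂μ2)).re -
        (2 * π : ℝ) ^ (-(n : ℝ)) * ((∫ z, Gq' z ∂μ2)).re|
      = (2 * π : ℝ) ^ (-(n : ℝ)) * |((∫ z, Gq z ∂μ2)).re - ((∫ z, Gq' z ∂μ2)).re| := by
        rw [← mul_sub, abs_mul, _root_.abs_of_nonneg hc0]
    _ ≤ (2 * π : ℝ) ^ (-(n : ℝ)) *
        (((∫ x, ‖ψ x‖ ^ 2) * Real.sqrt (∫ z : P, |V z.1| * |V z.2| * ‖z.1 - z.2‖ ^ 2)) *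
          dist q q') := mul_le_mul_of_nonneg_left step2 hc0
    _ = (2 * π : ℝ) ^ (-(n : ℝ)) * (∫ x, ‖ψ x‖ ^ 2) *
        Real.sqrt (∫ z : P, |V z.1| * |V z.2| * ‖z.1 - z.2‖ ^ 2) * dist q q' := by ring
end aux4

/-- For `V ∈ L¹(ℝⁿ)` with `∬ |V(x)||V(y)||x−y|² dx dy < ∞`, `ψ ∈ L²`, and
`φ = |V|^{1/2}ψ`, the gradient of `p ↦ |φ̂(p)|²` is bounded uniformly by
`(2π)^{-n} ‖ψ‖₂² (∬ |V(x)||V(y)||x−y|² dx dy)^{1/2}`. -/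
theorem stmt_5 (n : ℕ) (V : EuclideanSpace ℝ (Fin n) → ℝ)
    (ψ : EuclideanSpace ℝ (Fin n) → ℂ)
    (hV : Integrable V) (hψ : MemLp ψ 2 volume)
    (hVV : Integrable (fun z : EuclideanSpace ℝ (Fin n) × EuclideanSpace ℝ (Fin n) =>
      |V z.1| * |V z.2| * ‖z.1 - z.2‖ ^ 2)) :
    ∀ p : EuclideanSpace ℝ (Fin n),
      ‖fderiv ℝ (fun q : EuclideanSpace ℝ (Fin n) =>
          ‖(((2 * π) ^ (-(n : ℝ) / 2) : ℝ) : ℂ) *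
            ∫ x, (Real.sqrt |V x| : ℂ) * ψ x *
              Complex.exp (-Complex.I * ((inner ℝ q x : ℝ) : ℂ))‖ ^ 2) p‖ ≤
        (2 * π : ℝ) ^ (-(n : ℝ)) * (∫ x, ‖ψ x‖ ^ 2) *
          Real.sqrt (∫ z : EuclideanSpace ℝ (Fin n) × EuclideanSpace ℝ (Fin n),
            |V z.1| * |V z.2| * ‖z.1 - z.2‖ ^ 2) := by
  intro p
  have hK : (0:ℝ) ≤ (2 * π : ℝ) ^ (-(n : ℝ)) * (∫ x, ‖ψ x‖ ^ 2) *
      Real.sqrt (∫ z : EuclideanSpace ℝ (Fin n) × EuclideanSpace ℝ (Fin n),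
        |V z.1| * |V z.2| * ‖z.1 - z.2‖ ^ 2) := by
    rw [mul_assoc]
    exact mul_nonneg (Real.rpow_nonneg (by positivity) _)
      (mul_nonneg (integral_nonneg fun x => by positivity) (Real.sqrt_nonneg _))
  have hre : (fun q : EuclideanSpace ℝ (Fin n) =>
      ‖(((2 * π) ^ (-(n : ℝ) / 2) : ℝ) : ℂ) *
        ∫ x, (Real.sqrt |V x| : ℂ) * ψ x *
          Complex.exp (-Complex.I * ((inner ℝ q x : ℝ) : ℂ))‖ ^ 2)
      = (fun q : EuclideanSpace ℝ (Fin n) =>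
        ‖(((2 * π) ^ (-(n : ℝ) / 2) : ℝ) : ℂ) * ∫ x, gfun V ψ q x‖ ^ 2) := rfl
  rw [hre]
  refine le_trans (norm_fderiv_le_of_lipschitz ℝ (main_lip hV hψ hVV)) ?_
  rw [Real.coe_toNNReal _ hK]
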